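/- For every k ≥ 2 and every surjective colouring Δ : ℕ^(2) ↠ [k], one has |F_Δ| ≥ 1 + log₂ k; equivalently, 2^(|F_Δ| − 1) ≥ k. In particular ψ(k) ≥ 1 + log₂ k. -/

import Mathlib

/-- The colour of the unordered edge `{x, y}` (only values on distinct pairs matter). -/
def edgeCol (Δ : ℕ → ℕ → ℕ) (x y : ℕ) : ℕ := Δ (min x y) (max x y)

/-- `colourSet Δ X` is the set of colours attained by `Δ` on edges with both endpoints in `X`. -/
def colourSet (Δ : ℕ → ℕ → ℕ) (X : Set ℕ) : Set ℕ :=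
  {c | ∃ x ∈ X, ∃ y ∈ X, x ≠ y ∧ edgeCol Δ x y = c}

/-- `Δ` is a surjective colouring `ℕ^(2) ↠ [k]` of the edges of the complete
graph on `ℕ` with colour set `[k] = {1, …, k}`. -/
def IsColouring (Δ : ℕ → ℕ → ℕ) (k : ℕ) : Prop :=
  (∀ x y : ℕ, x ≠ y → edgeCol Δ x y ∈ Finset.Icc 1 k) ∧
  (∀ c ∈ Finset.Icc 1 k, ∃ x y : ℕ, x ≠ y ∧ edgeCol Δ x y = c)

/-- `F_Δ`: the set of `m ∈ [k]` for which some infinite `X ⊆ ℕ` is exactly `m`-coloured. -/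
def FSet (Δ : ℕ → ℕ → ℕ) (k : ℕ) : Set ℕ :=
  {m | m ∈ Finset.Icc 1 k ∧ ∃ X : Set ℕ, X.Infinite ∧ (colourSet Δ X).ncard = m}

/-- `ψ k`: the minimum of `|F_Δ|` over all surjective colourings `Δ : ℕ^(2) ↠ [k]`. -/
noncomputable def psi (k : ℕ) : ℕ :=
  sInf {m | ∃ Δ : ℕ → ℕ → ℕ, IsColouring Δ k ∧ (FSet Δ k).ncard = m}

section Auxiliary

variable {Δ : ℕ → ℕ → ℕ} {k : ℕ}

lemma edgeCol_symm (Δ : ℕ → ℕ → ℕ) (x y : ℕ) : edgeCol Δ x y = edgeCol Δ y x := by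
  unfold edgeCol; rw [min_comm, max_comm]

lemma colourSet_mono (Δ : ℕ → ℕ → ℕ) {X Y : Set ℕ} (h : X ⊆ Y) :
    colourSet Δ X ⊆ colourSet Δ Y := by
  rintro c ⟨x, hx, y, hy, hxy, rfl⟩
  exact ⟨x, h hx, y, h hy, hxy, rfl⟩

lemma colourSet_subset_Icc (hcol : IsColouring Δ k) (Z : Set ℕ) :
    colourSet Δ Z ⊆ ↑(Finset.Icc 1 k) := by
  rintro c ⟨x, hx, y, hy, hxy, rfl⟩
  exact_mod_cast hcol.1 x y hxy

lemma colourSet_finite (hcol : IsColouring Δ k) (Z : Set ℕ) :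
    (colourSet Δ Z).Finite :=
  Set.Finite.subset (Finset.Icc 1 k).finite_toSet (colourSet_subset_Icc hcol Z)

lemma exists_pair_of_infinite {Z : Set ℕ} (hZ : Z.Infinite) :
    ∃ a ∈ Z, ∃ b ∈ Z, a ≠ b := by
  obtain ⟨a, ha⟩ := hZ.nonempty
  obtain ⟨b, hb⟩ := (hZ.diff (Set.finite_singleton a)).nonempty
  exact ⟨a, ha, b, hb.1, fun h => hb.2 h.symm⟩

lemma colourSet_nonempty {Z : Set ℕ} (hZ : Z.Infinite) :
    (colourSet Δ Z).Nonempty := by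
  obtain ⟨a, ha, b, hb, hab⟩ := exists_pair_of_infinite hZ
  exact ⟨edgeCol Δ a b, a, ha, b, hb, hab, rfl⟩

lemma infinite_pigeonhole {A : Set ℕ} (hA : A.Infinite) (g : ℕ → ℕ)
    (hg : ∀ a ∈ A, g a ≤ k) : ∃ c, {a ∈ A | g a = c}.Infinite := by
  by_contra h
  push_neg at h
  have hsub : A ⊆ ⋃ c ∈ Finset.Iic k, {a ∈ A | g a = c} := by
    intro a ha
    exact Set.mem_biUnion (Finset.mem_Iic.2 (hg a ha)) ⟨ha, rfl⟩
  exact hA (Set.Finite.subset (Set.Finite.biUnion (Finset.Iic k).finite_toSet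
    (fun c _ => h c)) hsub)

lemma mem_FSet_of_infinite (hcol : IsColouring Δ k)
    {Z : Set ℕ} (hZ : Z.Infinite) : (colourSet Δ Z).ncard ∈ FSet Δ k := by
  refine ⟨Finset.mem_Icc.2 ⟨?_, ?_⟩, Z, hZ, rfl⟩
  · exact (Set.ncard_pos (colourSet_finite hcol Z)).2 (colourSet_nonempty hZ)
  · calc (colourSet Δ Z).ncard ≤ (↑(Finset.Icc 1 k) : Set ℕ).ncard :=
          Set.ncard_le_ncard (colourSet_subset_Icc hcol Z) (Finset.Icc 1 k).finite_toSet
    _ = k := by rw [Set.ncard_coe_finset, Nat.card_Icc]; omega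

lemma k_mem_FSet (hcol : IsColouring Δ k) : k ∈ FSet Δ k := by
  have h1 : colourSet Δ Set.univ = ↑(Finset.Icc 1 k) := by
    apply Set.Subset.antisymm (colourSet_subset_Icc hcol _)
    intro c hc
    obtain ⟨x, y, hxy, hec⟩ := hcol.2 c (by exact_mod_cast hc)
    exact ⟨x, trivial, y, trivial, hxy, hec⟩
  have h2 := mem_FSet_of_infinite hcol (Set.infinite_univ (α := ℕ))
  rwa [h1, Set.ncard_coe_finset, Nat.card_Icc, Nat.add_sub_cancel] at h2

lemma exists_mono (hcol : IsColouring Δ k) {X : Set ℕ} (hX : X.Infinite) :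
    ∃ γ M, M ⊆ X ∧ M.Infinite ∧ ∀ x ∈ M, ∀ y ∈ M, x ≠ y → edgeCol Δ x y = γ := by
  classical
  let Inv : ℕ × ℕ × Set ℕ → Prop := fun s =>
    s.1 ∈ X ∧ s.2.2 ⊆ X ∧ s.2.2.Infinite ∧ ∀ a ∈ s.2.2, s.1 < a ∧ edgeCol Δ s.1 a = s.2.1
  have hstep : ∀ A : Set ℕ, A ⊆ X → A.Infinite →
      ∃ s : ℕ × ℕ × Set ℕ, Inv s ∧ s.1 ∈ A ∧ s.2.2 ⊆ A := by
    intro A hAX hA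
    obtain ⟨x, hx⟩ := hA.nonempty
    have hA' : (A \ Set.Iic x).Infinite := hA.diff (Set.finite_Iic x)
    have hbound : ∀ a ∈ A \ Set.Iic x, edgeCol Δ x a ≤ k := by
      intro a ha
      have h2 : ¬ a ≤ x := ha.2
      exact (Finset.mem_Icc.1 (hcol.1 x a (by omega))).2
    obtain ⟨c, hc⟩ := infinite_pigeonhole (k := k) hA' (edgeCol Δ x) hbound
    refine ⟨(x, c, {a ∈ A \ Set.Iic x | edgeCol Δ x a = c}), ⟨hAX hx, ?_, hc, ?_⟩, hx, ?_⟩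
    · intro a ha; exact hAX ha.1.1
    · intro a ha
      have h2 : ¬ a ≤ x := ha.1.2
      exact ⟨by omega, ha.2⟩
    · intro a ha; exact ha.1.1
  obtain ⟨s0, hs0⟩ := hstep X subset_rfl hX
  let next : {s // Inv s} → {s // Inv s} := fun p =>
    ⟨(hstep p.1.2.2 p.2.2.1 p.2.2.2.1).choose, (hstep p.1.2.2 p.2.2.1 p.2.2.2.1).choose_spec.1⟩
  let seq : ℕ → {s // Inv s} := fun n => Nat.rec ⟨s0, hs0.1⟩ (fun _ p => next p) n
  have hseq : ∀ n, (seq (n + 1)).1.1 ∈ (seq n).1.2.2 ∧ (seq (n + 1)).1.2.2 ⊆ (seq n).1.2.2 := by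
    intro n
    exact (hstep (seq n).1.2.2 (seq n).2.2.1 (seq n).2.2.2.1).choose_spec.2
  have hchain : ∀ i j, i ≤ j → (seq j).1.2.2 ⊆ (seq i).1.2.2 := by
    intro i j hij
    induction j, hij using Nat.le_induction with
    | base => exact subset_rfl
    | succ n hn ih => exact (hseq n).2.trans ih
  have hx : ∀ i j, i < j →
      (seq i).1.1 < (seq j).1.1 ∧ edgeCol Δ (seq i).1.1 (seq j).1.1 = (seq i).1.2.1 := by
    intro i j hij
    have hmem : (seq j).1.1 ∈ (seq i).1.2.2 := by
      obtain ⟨m, rfl⟩ : ∃ m, j = m + 1 := ⟨j - 1, by omega⟩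
      exact hchain i m (by omega) (hseq m).1
    exact (seq i).2.2.2.2 _ hmem
  have hcb : ∀ n, (seq n).1.2.1 ≤ k := by
    intro n
    obtain ⟨a, ha⟩ := (seq n).2.2.2.1.nonempty
    have h2 := (seq n).2.2.2.2 a ha
    have hne : (seq n).1.1 ≠ a := by omega
    rw [← h2.2]
    exact (Finset.mem_Icc.1 (hcol.1 _ _ hne)).2
  obtain ⟨γ, hγ⟩ := infinite_pigeonhole (k := k) (Set.infinite_univ (α := ℕ))
    (fun n => (seq n).1.2.1) (fun a _ => hcb a)
  have hsm : StrictMono (fun n => (seq n).1.1) := fun i j hij => (hx i j hij).1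
  refine ⟨γ, (fun n => (seq n).1.1) '' {a ∈ (Set.univ : Set ℕ) | (seq a).1.2.1 = γ},
    ?_, ?_, ?_⟩
  · rintro _ ⟨n, _, rfl⟩; exact (seq n).2.1
  · exact hγ.image (hsm.injective.injOn)
  · rintro _ ⟨i, hi, rfl⟩ _ ⟨j, hj, rfl⟩ hne
    have hij : i ≠ j := by rintro rfl; exact hne rfl
    rcases hij.lt_or_gt with h | h
    · rw [(hx i j h).2]; exact hi.2
    · rw [edgeCol_symm, (hx j i h).2]; exact hj.2

lemma mem_trace_iff {M : Set ℕ} {γ : ℕ} {e : ℕ → ℕ} (hM : M.Infinite)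
    (hmono : ∀ u ∈ M, ∀ v ∈ M, u ≠ v → edgeCol Δ u v = γ)
    {W : Finset ℕ} (hconst : ∀ w ∈ W, ∀ m ∈ M, edgeCol Δ w m = e w) (d : ℕ) :
    d ∈ colourSet Δ (M ∪ ↑W) ↔
      (d = γ ∨ (∃ w ∈ W, e w = d) ∨ (∃ u ∈ W, ∃ v ∈ W, u ≠ v ∧ edgeCol Δ u v = d)) := by
  constructor
  · rintro ⟨x, hx, y, hy, hxy, rfl⟩
    rcases hx with hxM | hxW
    · rcases hy with hyM | hyW
      · exact Or.inl (hmono x hxM y hyM hxy)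
      · exact Or.inr (Or.inl ⟨y, hyW, (hconst y hyW x hxM).symm.trans (edgeCol_symm Δ y x)⟩)
    · rcases hy with hyM | hyW
      · exact Or.inr (Or.inl ⟨x, hxW, (hconst x hxW y hyM).symm⟩)
      · exact Or.inr (Or.inr ⟨x, hxW, y, hyW, hxy, rfl⟩)
  · rintro (rfl | ⟨w, hw, rfl⟩ | ⟨u, hu, v, hv, huv, rfl⟩)
    · obtain ⟨a, ha, b, hb, hab⟩ := exists_pair_of_infinite hM
      exact ⟨a, Or.inl ha, b, Or.inl hb, hab, hmono a ha b hb hab⟩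
    · obtain ⟨m, hm⟩ := (hM.diff (Set.finite_singleton w)).nonempty
      exact ⟨w, Or.inr hw, m, Or.inl hm.1, fun h => hm.2 h.symm, hconst w hw m hm.1⟩
    · exact ⟨u, Or.inr hu, v, Or.inr hv, huv, rfl⟩

lemma one_mem_FSet (hcol : IsColouring Δ k) : (1 : ℕ) ∈ FSet Δ k := by
  obtain ⟨γ, M, hMX, hMinf, hmono⟩ := exists_mono hcol (Set.infinite_univ (α := ℕ))
  have h1 : colourSet Δ M = {γ} := by
    apply Set.Subset.antisymm
    · rintro d ⟨x, hxm, y, hym, hxy, rfl⟩; exact hmono x hxm y hym hxy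
    · rintro d rfl
      obtain ⟨a, ha, b, hb, hab⟩ := exists_pair_of_infinite hMinf
      exact ⟨a, ha, b, hb, hab, hmono a ha b hb hab⟩
  have h2 := mem_FSet_of_infinite hcol hMinf
  rwa [h1, Set.ncard_singleton] at h2

lemma lemmaD (hcol : IsColouring Δ k) {b : ℕ} (hb : b ∈ FSet Δ k) (hb2 : 2 ≤ b) :
    ∃ s ∈ FSet Δ k, s < b ∧ b ≤ 2 * s := by
  classical
  by_contra hcon
  push_neg at hcon
  obtain ⟨hbIcc, X, hXinf, hXb⟩ := hb
  have hCfin : (colourSet Δ X).Finite := colourSet_finite hcol X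
  have h1F : (1 : ℕ) ∈ FSet Δ k := one_mem_FSet hcol
  set Fb := {m | m ∈ FSet Δ k ∧ m < b} with hFbdef
  have hbddFb : BddAbove Fb := ⟨k, fun m hm => (Finset.mem_Icc.1 hm.1.1).2⟩
  have h1Fb : (1 : ℕ) ∈ Fb := ⟨h1F, by omega⟩
  set s := sSup Fb with hsdef
  have hsFb : s ∈ Fb := Nat.sSup_mem ⟨1, h1Fb⟩ hbddFb
  have hs_max : ∀ m ∈ FSet Δ k, m < b → m ≤ s := fun m h1 h2 => le_csSup hbddFb ⟨h1, h2⟩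
  have hsb : 2 * s < b := by
    have := hcon s hsFb.1 hsFb.2; omega
  have hs1 : 1 ≤ s := le_csSup hbddFb h1Fb
  -- every infinite subset of X has small trace or full trace
  have hstar : ∀ Z : Set ℕ, Z ⊆ X → Z.Infinite →
      (colourSet Δ Z).ncard ≤ s ∨ (colourSet Δ Z).ncard = b := by
    intro Z hZX hZ
    have hle : (colourSet Δ Z).ncard ≤ b := by
      rw [← hXb]; exact Set.ncard_le_ncard (colourSet_mono Δ hZX) hCfin
    rcases eq_or_lt_of_le hle with h | h
    · exact Or.inr h
    · exact Or.inl (hs_max _ (mem_FSet_of_infinite hcol hZ) h)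
  -- the family of "tame" structures inside X
  let Tm : Set ℕ → Finset ℕ → ℕ → (ℕ → ℕ) → Prop := fun M W γ e =>
    M ⊆ X ∧ M.Infinite ∧ ↑W ⊆ X ∧
    (∀ u ∈ M, ∀ v ∈ M, u ≠ v → edgeCol Δ u v = γ) ∧
    (∀ w ∈ W, ∀ m ∈ M, edgeCol Δ w m = e w)
  let V := {n | ∃ M W γ e, Tm M W γ e ∧ (colourSet Δ (M ∪ ↑W)).ncard = n}
  have hVne : V.Nonempty := by
    obtain ⟨γ, M, hMX, hMinf, hmono⟩ := exists_mono hcol hXinf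
    exact ⟨_, M, ∅, γ, fun _ => 0, ⟨hMX, hMinf, by simp, hmono, by simp⟩, rfl⟩
  have hVb : ∀ n ∈ V, n ≤ b := by
    rintro n ⟨M, W, γ, e, hTm, rfl⟩
    rw [← hXb]
    exact Set.ncard_le_ncard (colourSet_mono Δ (Set.union_subset hTm.1 hTm.2.2.1)) hCfin
  have hVbdd : BddAbove V := ⟨b, hVb⟩
  have hσV : sSup V ∈ V := Nat.sSup_mem hVne hVbdd
  -- the maximum is b
  have hσeq : sSup V = b := by
    by_contra hne
    have hσlt : sSup V < b := lt_of_le_of_ne (hVb _ hσV) hne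
    obtain ⟨M, W, γ, e, hTm, hTr⟩ := hσV
    obtain ⟨hMX, hMinf, hWX, hmono, hconst⟩ := hTm
    have hnotsub : ¬ colourSet Δ X ⊆ colourSet Δ (M ∪ ↑W) := by
      intro h
      have := Set.ncard_le_ncard h (colourSet_finite hcol _)
      omega
    obtain ⟨d, hdC, hdT⟩ := Set.not_subset.1 hnotsub
    obtain ⟨p, hpX, q, hqX, hpq, hd⟩ := hdC
    have hM1 : {m ∈ M | p < m ∧ q < m}.Infinite := by
      apply Set.Infinite.mono (s := M \ Set.Iic (max p q))
      · rintro m ⟨hmM, hm⟩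
        have h2 : ¬ m ≤ max p q := hm
        exact ⟨hmM, by omega, by omega⟩
      · exact hMinf.diff (Set.finite_Iic _)
    have hbp : ∀ a ∈ {m ∈ M | p < m ∧ q < m}, edgeCol Δ p a ≤ k := by
      intro a ha
      have h2 := ha.2.1
      exact (Finset.mem_Icc.1 (hcol.1 p a (by omega))).2
    obtain ⟨ep, hep⟩ := infinite_pigeonhole (k := k) hM1 (edgeCol Δ p) hbp
    have hbq : ∀ a ∈ {a ∈ {m ∈ M | p < m ∧ q < m} | edgeCol Δ p a = ep},
        edgeCol Δ q a ≤ k := by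
      intro a ha
      have h2 := ha.1.2.2
      exact (Finset.mem_Icc.1 (hcol.1 q a (by omega))).2
    obtain ⟨eq', heq'⟩ := infinite_pigeonhole (k := k) hep (edgeCol Δ q) hbq
    set M3 := {a ∈ {a ∈ {m ∈ M | p < m ∧ q < m} | edgeCol Δ p a = ep} |
        edgeCol Δ q a = eq'} with hM3def
    have hM3sub : M3 ⊆ M := fun a ha => ha.1.1.1
    have hM3inf : M3.Infinite := heq'
    set W1 := insert p (insert q W) with hW1def
    set e1 := fun w => if w = p then ep else if w = q then eq' else e w with he1def
    have hTm1 : Tm M3 W1 γ e1 := by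
      refine ⟨hM3sub.trans hMX, hM3inf, ?_, ?_, ?_⟩
      · intro a ha
        simp only [hW1def, Finset.coe_insert, Set.mem_insert_iff, Finset.mem_coe] at ha
        rcases ha with rfl | rfl | h
        · exact hpX
        · exact hqX
        · exact hWX h
      · intro u hu v hv huv
        exact hmono u (hM3sub hu) v (hM3sub hv) huv
      · intro w hw m hm
        by_cases hwp : w = p
        · subst hwp
          simp only [he1def, if_pos rfl]
          exact hm.1.2
        · by_cases hwq : w = q
          · subst hwq
            simp only [he1def, if_neg hwp, if_pos rfl]
            exact hm.2
          · have hwW : w ∈ W := by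
              simp only [hW1def, Finset.mem_insert] at hw
              tauto
            simp only [he1def, if_neg hwp, if_neg hwq]
            exact hconst w hwW m (hM3sub hm)
    have hWW1 : (↑W : Set ℕ) ⊆ ↑W1 := by
      intro a ha
      simp only [hW1def, Finset.coe_insert, Set.mem_insert_iff, Finset.mem_coe]
      right; right; exact_mod_cast ha
    have hsub : colourSet Δ (M ∪ ↑W) ⊆ colourSet Δ (M3 ∪ ↑W1) := by
      rintro d' ⟨x, hxU, y, hyU, hxy, rfl⟩
      obtain ⟨m1, hm1, m2, hm2, hm12⟩ := exists_pair_of_infinite hM3inf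
      rcases hxU with hxM | hxW
      · rcases hyU with hyM | hyW
        · refine ⟨m1, Or.inl hm1, m2, Or.inl hm2, hm12, ?_⟩
          rw [hmono m1 (hM3sub hm1) m2 (hM3sub hm2) hm12, hmono x hxM y hyM hxy]
        · obtain ⟨m, hm⟩ := (hM3inf.diff (Set.finite_singleton y)).nonempty
          refine ⟨y, Or.inr (hWW1 hyW), m, Or.inl hm.1, fun h => hm.2 h.symm, ?_⟩
          rw [hconst y hyW m (hM3sub hm.1), edgeCol_symm Δ x y, hconst y hyW x hxM]
      · rcases hyU with hyM | hyW
        · obtain ⟨m, hm⟩ := (hM3inf.diff (Set.finite_singleton x)).nonempty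
          refine ⟨x, Or.inr (hWW1 hxW), m, Or.inl hm.1, fun h => hm.2 h.symm, ?_⟩
          rw [hconst x hxW m (hM3sub hm.1), hconst x hxW y hyM]
        · exact ⟨x, Or.inr (hWW1 hxW), y, Or.inr (hWW1 hyW), hxy, rfl⟩
    have hdnew : d ∈ colourSet Δ (M3 ∪ ↑W1) := by
      refine ⟨p, Or.inr ?_, q, Or.inr ?_, hpq, hd⟩
      · simp [hW1def]
      · simp [hW1def]
    have hcard : sSup V + 1 ≤ (colourSet Δ (M3 ∪ ↑W1)).ncard := by
      have hins : insert d (colourSet Δ (M ∪ ↑W)) ⊆ colourSet Δ (M3 ∪ ↑W1) :=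
        Set.insert_subset hdnew hsub
      have h1 : (insert d (colourSet Δ (M ∪ ↑W))).ncard = sSup V + 1 := by
        rw [Set.ncard_insert_of_notMem hdT (colourSet_finite hcol _), hTr]
      rw [← h1]
      exact Set.ncard_le_ncard hins (colourSet_finite hcol _)
    have hmem : (colourSet Δ (M3 ∪ ↑W1)).ncard ∈ V := ⟨M3, W1, γ, e1, hTm1, rfl⟩
    have := le_csSup hVbdd hmem
    omega
  rw [hσeq] at hσV
  obtain ⟨M, W, γ, e, hTm, hTrb⟩ := hσV
  obtain ⟨hMX, hMinf, hWX, hmono, hconst⟩ := hTm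
  -- choose a minimal W' realizing all b colours
  set Sc := {n | ∃ W'' : Finset ℕ, W'' ⊆ W ∧ W''.card = n ∧
      (colourSet Δ (M ∪ ↑W'')).ncard = b} with hScdef
  have hScne : Sc.Nonempty := ⟨W.card, W, subset_rfl, rfl, hTrb⟩
  obtain ⟨W', hW'W, hW'card, hW'b⟩ := Nat.sInf_mem hScne
  have hW'X : (↑W' : Set ℕ) ⊆ X := fun a ha => hWX (hW'W (by exact_mod_cast ha))
  have hconst' : ∀ (W'' : Finset ℕ), W'' ⊆ W' → ∀ w ∈ W'', ∀ m ∈ M, edgeCol Δ w m = e w :=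
    fun W'' hsub w hw m hm => hconst w (hW'W (hsub hw)) m hm
  have hch : ∀ (W'' : Finset ℕ), W'' ⊆ W' → ∀ d, d ∈ colourSet Δ (M ∪ ↑W'') ↔
      (d = γ ∨ (∃ w ∈ W'', e w = d) ∨ (∃ u ∈ W'', ∃ v ∈ W'', u ≠ v ∧ edgeCol Δ u v = d)) :=
    fun W'' hsub d => mem_trace_iff hMinf hmono (hconst' W'' hsub) d
  have hsubX : ∀ (W'' : Finset ℕ), W'' ⊆ W' → M ∪ ↑W'' ⊆ X :=
    fun W'' hsub => Set.union_subset hMX (fun a ha => hW'X (by exact_mod_cast hsub (by exact_mod_cast ha)))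
  have hinfU : ∀ (W'' : Finset ℕ), (M ∪ (↑W'' : Set ℕ)).Infinite :=
    fun W'' => hMinf.mono Set.subset_union_left
  have hmincard : ∀ w ∈ W', (colourSet Δ (M ∪ ↑(W'.erase w))).ncard ≤ s := by
    intro w hw
    rcases hstar _ (hsubX _ (Finset.erase_subset _ _)) (hinfU _) with h | h
    · exact h
    · exfalso
      have hmem : W'.card - 1 ∈ Sc :=
        ⟨W'.erase w, (Finset.erase_subset _ _).trans hW'W,
          by rw [Finset.card_erase_of_mem hw], h⟩
      have h2 := Nat.sInf_le hmem
      have hpos : 1 ≤ W'.card := Finset.card_pos.2 ⟨w, hw⟩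
      omega
  rcases le_or_gt b 4 with hble | hbge
  · -- small case : s = 1
    have hse : s = 1 := by omega
    have hb3 : 3 ≤ b := by omega
    have hew : ∀ w ∈ W', e w = γ := by
      intro w hw
      by_contra hne
      have hwsub : ({w} : Finset ℕ) ⊆ W' := Finset.singleton_subset_iff.2 hw
      have hTsing : colourSet Δ (M ∪ ↑({w} : Finset ℕ)) = {γ, e w} := by
        apply Set.Subset.antisymm
        · intro d hd
          rcases (hch {w} hwsub d).1 hd with rfl | ⟨w', hw', rfl⟩ | ⟨u, hu, v, hv, huv, _⟩
          · exact Or.inl rfl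
          · rw [Finset.mem_singleton] at hw'; subst hw'; exact Or.inr rfl
          · rw [Finset.mem_singleton] at hu hv; subst hu; subst hv; exact absurd rfl huv
        · rintro d (rfl | rfl)
          · exact (hch {w} hwsub _).2 (Or.inl rfl)
          · exact (hch {w} hwsub _).2 (Or.inr (Or.inl ⟨w, Finset.mem_singleton_self w, rfl⟩))
      have hn2 : (colourSet Δ (M ∪ ↑({w} : Finset ℕ))).ncard = 2 := by
        rw [hTsing]; exact Set.ncard_pair (Ne.symm hne)
      rcases hstar _ (hsubX _ hwsub) (hinfU _) with h | h <;> omega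
    have hpairs : ∀ u ∈ W', ∀ v ∈ W', u ≠ v → edgeCol Δ u v = γ := by
      intro u hu v hv huv
      by_contra hne
      have hpsub : ({u, v} : Finset ℕ) ⊆ W' := by
        intro a ha
        rcases Finset.mem_insert.1 ha with rfl | ha
        · exact hu
        · rw [Finset.mem_singleton] at ha; subst ha; exact hv
      have hTp : colourSet Δ (M ∪ ↑({u, v} : Finset ℕ)) = {γ, edgeCol Δ u v} := by
        apply Set.Subset.antisymm
        · intro d hd
          rcases (hch {u, v} hpsub d).1 hd with rfl | ⟨w', hw', rfl⟩ | ⟨x, hx2, y, hy2, hxy, rfl⟩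
          · exact Or.inl rfl
          · have : e w' = γ := hew w' (hpsub hw')
            rw [this]; exact Or.inl rfl
          · have hx' : x = u ∨ x = v := by simpa using hx2
            have hy' : y = u ∨ y = v := by simpa using hy2
            rcases hx' with h1 | h1 <;> rcases hy' with h2 | h2
            · exact absurd (h1.trans h2.symm) hxy
            · rw [h1, h2]; exact Or.inr rfl
            · rw [h1, h2, edgeCol_symm Δ v u]; exact Or.inr rfl
            · exact absurd (h1.trans h2.symm) hxy
        · rintro d (rfl | rfl)
          · exact (hch _ hpsub _).2 (Or.inl rfl)
          · exact (hch _ hpsub _).2 (Or.inr (Or.inr ⟨u, Finset.mem_insert_self u _, v,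
              by simp, huv, rfl⟩))
      have hn2 : (colourSet Δ (M ∪ ↑({u, v} : Finset ℕ))).ncard = 2 := by
        rw [hTp]; exact Set.ncard_pair (Ne.symm hne)
      rcases hstar _ (hsubX _ hpsub) (hinfU _) with h | h <;> omega
    have hsubγ : colourSet Δ (M ∪ ↑W') ⊆ {γ} := by
      intro d hd
      rcases (hch W' subset_rfl d).1 hd with rfl | ⟨w', hw', rfl⟩ | ⟨u, hu, v, hv, huv, rfl⟩
      · rfl
      · exact hew w' hw'
      · exact hpairs u hu v hv huv
    have := Set.ncard_le_ncard hsubγ (Set.finite_singleton γ)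
    rw [hW'b, Set.ncard_singleton] at this
    omega
  · -- large case : b ≥ 5
    set T := colourSet Δ (M ∪ ↑W') with hTdef
    have hTfin : T.Finite := colourSet_finite hcol _
    set D : ℕ → Set ℕ := fun w => T \ colourSet Δ (M ∪ ↑(W'.erase w)) with hDdef
    have hDfin : ∀ w, (D w).Finite := fun w => hTfin.subset Set.diff_subset
    have hDsubT : ∀ w, D w ⊆ T := fun w => Set.diff_subset
    have hersub : ∀ w, colourSet Δ (M ∪ ↑(W'.erase w)) ⊆ T :=
      fun w => colourSet_mono Δ (Set.union_subset_union_right _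
        (by exact_mod_cast Finset.erase_subset w W'))
    have hDlow : ∀ w ∈ W', b - s ≤ (D w).ncard := by
      intro w hw
      have heq : (D w).ncard = T.ncard - (colourSet Δ (M ∪ ↑(W'.erase w))).ncard :=
        Set.ncard_diff (hersub w) (colourSet_finite hcol _)
      have h2 := hmincard w hw
      rw [heq, hW'b]
      omega
    have hreal : ∀ w ∈ W', ∀ d ∈ D w, ∀ x y : ℕ, x ∈ M ∪ ↑W' → y ∈ M ∪ ↑W' → x ≠ y →
        edgeCol Δ x y = d → x = w ∨ y = w := by
      intro w hw d hd x y hxU hyU hxy hec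
      by_contra hcontra
      push_neg at hcontra
      apply hd.2
      refine ⟨x, ?_, y, ?_, hxy, hec⟩
      · rcases hxU with h | h
        · exact Or.inl h
        · refine Or.inr ?_
          rw [Finset.coe_erase]
          exact ⟨h, by simpa using hcontra.1⟩
      · rcases hyU with h | h
        · exact Or.inl h
        · refine Or.inr ?_
          rw [Finset.coe_erase]
          exact ⟨h, by simpa using hcontra.2⟩
    have hDpair : ∀ w ∈ W', ∀ w' ∈ W', w ≠ w' → D w ∩ D w' ⊆ {edgeCol Δ w w'} := by
      intro w hw w' hw' hne d hd
      obtain ⟨x, hxU, y, hyU, hxy, hec⟩ := (hDsubT w hd.1)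
      have h1 := hreal w hw d hd.1 x y hxU hyU hxy hec
      have h2 := hreal w' hw' d hd.2 x y hxU hyU hxy hec
      rcases h1 with h1 | h1 <;> rcases h2 with h2 | h2
      · exact absurd (h1.symm.trans h2) hne
      · rw [← hec, h1, h2]; rfl
      · rw [← hec, edgeCol_symm Δ x y, h1, h2]; rfl
      · exact absurd (h1.symm.trans h2) hne
    -- at most 3 special vertices
    have hn3 : W'.card ≤ 3 := by
      by_contra hn
      push_neg at hn
      obtain ⟨W4, hW4sub, hW4card⟩ := Finset.exists_subset_card_eq (s := W') (n := 4) (by omega)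
      obtain ⟨a, ha4⟩ := Finset.card_pos.1 (by omega : 0 < W4.card)
      have hrest : (W4.erase a).card = 3 := by
        rw [Finset.card_erase_of_mem ha4, hW4card]
      obtain ⟨u, v, w, huv, huw, hvw, hrest3⟩ := Finset.card_eq_three.1 hrest
      have hu4 : u ∈ W4.erase a := by rw [hrest3]; simp
      have hv4 : v ∈ W4.erase a := by rw [hrest3]; simp
      have hw4 : w ∈ W4.erase a := by rw [hrest3]; simp
      have haW : a ∈ W' := hW4sub ha4
      have huW : u ∈ W' := hW4sub (Finset.mem_of_mem_erase hu4)
      have hvW : v ∈ W' := hW4sub (Finset.mem_of_mem_erase hv4)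
      have hwW : w ∈ W' := hW4sub (Finset.mem_of_mem_erase hw4)
      have hau : a ≠ u := fun h => (Finset.mem_erase.1 hu4).1 h.symm
      have hav : a ≠ v := fun h => (Finset.mem_erase.1 hv4).1 h.symm
      have haw : a ≠ w := fun h => (Finset.mem_erase.1 hw4).1 h.symm
      set E2 := D u \ D a with hE2def
      set E3 := D v \ (D a ∪ D u) with hE3def
      set E4 := D w \ (D a ∪ D u ∪ D v) with hE4def
      have hE2card : (D u).ncard ≤ E2.ncard + 1 := by
        have h1 : E2 = D u \ (D u ∩ D a) := by rw [hE2def, Set.diff_self_inter]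
        have h2 : (D u ∩ D a).ncard ≤ 1 := by
          have := Set.ncard_le_ncard (hDpair u huW a haW (fun h => hau h.symm))
            (Set.finite_singleton _)
          simpa using this
        have h3 : E2.ncard = (D u).ncard - (D u ∩ D a).ncard := by
          rw [h1]; exact Set.ncard_diff Set.inter_subset_left ((hDfin u).subset Set.inter_subset_left)
        have h4 : (D u ∩ D a).ncard ≤ (D u).ncard :=
          Set.ncard_le_ncard Set.inter_subset_left (hDfin u)
        omega
      have hE3card : (D v).ncard ≤ E3.ncard + 2 := by
        have h1 : E3 = D v \ (D v ∩ (D a ∪ D u)) := by rw [hE3def, Set.diff_self_inter]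
        have h2 : (D v ∩ (D a ∪ D u)).ncard ≤ 2 := by
          have hd1 : (D v ∩ D a).ncard ≤ 1 := by
            have := Set.ncard_le_ncard (hDpair v hvW a haW (fun h => hav h.symm))
              (Set.finite_singleton _)
            simpa using this
          have hd2 : (D v ∩ D u).ncard ≤ 1 := by
            have := Set.ncard_le_ncard (hDpair v hvW u huW (fun h => huv h.symm))
              (Set.finite_singleton _)
            simpa using this
          calc (D v ∩ (D a ∪ D u)).ncard = ((D v ∩ D a) ∪ (D v ∩ D u)).ncard := by
                rw [Set.inter_union_distrib_left]
            _ ≤ (D v ∩ D a).ncard + (D v ∩ D u).ncard := Set.ncard_union_le _ _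
            _ ≤ 2 := by omega
        have h3 : E3.ncard = (D v).ncard - (D v ∩ (D a ∪ D u)).ncard := by
          rw [h1]; exact Set.ncard_diff Set.inter_subset_left ((hDfin v).subset Set.inter_subset_left)
        have h4 : (D v ∩ (D a ∪ D u)).ncard ≤ (D v).ncard :=
          Set.ncard_le_ncard Set.inter_subset_left (hDfin v)
        omega
      have hE4card : (D w).ncard ≤ E4.ncard + 3 := by
        have h1 : E4 = D w \ (D w ∩ (D a ∪ D u ∪ D v)) := by rw [hE4def, Set.diff_self_inter]
        have h2 : (D w ∩ (D a ∪ D u ∪ D v)).ncard ≤ 3 := by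
          have hd1 : (D w ∩ D a).ncard ≤ 1 := by
            have := Set.ncard_le_ncard (hDpair w hwW a haW (fun h => haw h.symm))
              (Set.finite_singleton _)
            simpa using this
          have hd2 : (D w ∩ D u).ncard ≤ 1 := by
            have := Set.ncard_le_ncard (hDpair w hwW u huW (fun h => huw h.symm))
              (Set.finite_singleton _)
            simpa using this
          have hd3 : (D w ∩ D v).ncard ≤ 1 := by
            have := Set.ncard_le_ncard (hDpair w hwW v hvW (fun h => hvw h.symm))
              (Set.finite_singleton _)
            simpa using this
          calc (D w ∩ (D a ∪ D u ∪ D v)).ncard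
              = ((D w ∩ D a) ∪ (D w ∩ D u) ∪ (D w ∩ D v)).ncard := by
                rw [Set.inter_union_distrib_left, Set.inter_union_distrib_left]
            _ ≤ ((D w ∩ D a) ∪ (D w ∩ D u)).ncard + (D w ∩ D v).ncard := Set.ncard_union_le _ _
            _ ≤ (D w ∩ D a).ncard + (D w ∩ D u).ncard + (D w ∩ D v).ncard := by
                have := Set.ncard_union_le (D w ∩ D a) (D w ∩ D u); omega
            _ ≤ 3 := by omega
        have h3 : E4.ncard = (D w).ncard - (D w ∩ (D a ∪ D u ∪ D v)).ncard := by
          rw [h1]; exact Set.ncard_diff Set.inter_subset_left ((hDfin w).subset Set.inter_subset_left)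
        have h4 : (D w ∩ (D a ∪ D u ∪ D v)).ncard ≤ (D w).ncard :=
          Set.ncard_le_ncard Set.inter_subset_left (hDfin w)
        omega
      -- disjoint union bounded by b
      have hd12 : Disjoint (D a) E2 := Set.disjoint_sdiff_right
      have hd3 : Disjoint (D a ∪ E2) E3 := by
        have h1 : Disjoint (D a ∪ D u) E3 := Set.disjoint_sdiff_right
        exact h1.mono_left (Set.union_subset_union_right _ Set.diff_subset)
      have hd4 : Disjoint (D a ∪ E2 ∪ E3) E4 := by
        have h1 : Disjoint (D a ∪ D u ∪ D v) E4 := Set.disjoint_sdiff_right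
        refine h1.mono_left ?_
        intro z hz
        rcases hz with (hz | hz) | hz
        · exact Or.inl (Or.inl hz)
        · exact Or.inl (Or.inr (Set.diff_subset hz))
        · exact Or.inr (Set.diff_subset hz)
      have hcard1 : (D a ∪ E2).ncard = (D a).ncard + E2.ncard :=
        Set.ncard_union_eq hd12 (hDfin a) ((hDfin u).subset Set.diff_subset)
      have hcard2 : (D a ∪ E2 ∪ E3).ncard = (D a).ncard + E2.ncard + E3.ncard := by
        rw [Set.ncard_union_eq hd3 (((hDfin a).union ((hDfin u).subset Set.diff_subset)))
          ((hDfin v).subset Set.diff_subset), hcard1]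
      have hcard3 : (D a ∪ E2 ∪ E3 ∪ E4).ncard =
          (D a).ncard + E2.ncard + E3.ncard + E4.ncard := by
        rw [Set.ncard_union_eq hd4
          ((((hDfin a).union ((hDfin u).subset Set.diff_subset)).union
            ((hDfin v).subset Set.diff_subset)))
          ((hDfin w).subset Set.diff_subset), hcard2]
      have hsubT4 : D a ∪ E2 ∪ E3 ∪ E4 ⊆ T := by
        intro z hz
        rcases hz with ((hz | hz) | hz) | hz
        · exact hDsubT a hz
        · exact hDsubT u (Set.diff_subset hz)
        · exact hDsubT v (Set.diff_subset hz)
        · exact hDsubT w (Set.diff_subset hz)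
      have htot : (D a).ncard + E2.ncard + E3.ncard + E4.ncard ≤ b := by
        rw [← hcard3, ← hW'b]
        exact Set.ncard_le_ncard hsubT4 hTfin
      have hla := hDlow a haW
      have hlu := hDlow u huW
      have hlv := hDlow v hvW
      have hlw := hDlow w hwW
      omega
    -- b - s ≤ |W'|
    have hW'ne : W'.Nonempty := by
      rcases Finset.eq_empty_or_nonempty W' with rfl | h
      · exfalso
        have hsubγ : colourSet Δ (M ∪ ↑(∅ : Finset ℕ)) ⊆ {γ} := by
          intro d hd
          rcases (hch ∅ subset_rfl d).1 hd with rfl | ⟨w', hw', _⟩ | ⟨x, hx2, _, _, _, _⟩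
          · rfl
          · exact absurd hw' (Finset.notMem_empty w')
          · exact absurd hx2 (Finset.notMem_empty x)
        have := Set.ncard_le_ncard hsubγ (Set.finite_singleton γ)
        rw [hW'b, Set.ncard_singleton] at this
        omega
      · exact h
    obtain ⟨w0, hw0⟩ := hW'ne
    have hDup : (D w0).ncard ≤ W'.card := by
      have hsubD : D w0 ⊆ {e w0} ∪ (fun u => edgeCol Δ w0 u) '' ↑(W'.erase w0) := by
        intro d hd
        rcases (hch W' subset_rfl d).1 (hDsubT w0 hd) with rfl | ⟨w', hw', rfl⟩ |
          ⟨x, hx2, y, hy2, hxy, rfl⟩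
        · exfalso
          apply hd.2
          obtain ⟨a, ha, c, hc, hac⟩ := exists_pair_of_infinite hMinf
          exact ⟨a, Or.inl ha, c, Or.inl hc, hac, hmono a ha c hc hac⟩
        · by_cases hww : w' = w0
          · subst hww; exact Or.inl rfl
          · exfalso
            apply hd.2
            obtain ⟨m, hm⟩ := (hMinf.diff (Set.finite_singleton w')).nonempty
            refine ⟨w', Or.inr ?_, m, Or.inl hm.1, fun h => hm.2 h.symm,
              hconst' W' subset_rfl w' hw' m hm.1⟩
            rw [Finset.coe_erase]
            exact ⟨by exact_mod_cast hw', by simpa using hww⟩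
        · have hor := hreal w0 hw0 _ hd x y (Or.inr (by exact_mod_cast hx2))
            (Or.inr (by exact_mod_cast hy2)) hxy rfl
          rcases hor with h | h
          · refine Or.inr ⟨y, ?_, ?_⟩
            · rw [Finset.coe_erase]
              refine ⟨by exact_mod_cast hy2, fun hy0 => hxy ?_⟩
              exact h.trans (Set.mem_singleton_iff.1 hy0).symm
            · show edgeCol Δ w0 y = edgeCol Δ x y
              rw [h]
          · refine Or.inr ⟨x, ?_, ?_⟩
            · rw [Finset.coe_erase]
              refine ⟨by exact_mod_cast hx2, fun hx0 => hxy ?_⟩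
              exact (Set.mem_singleton_iff.1 hx0).trans h.symm
            · show edgeCol Δ w0 x = edgeCol Δ x y
              rw [← h]
              exact edgeCol_symm Δ y x
      calc (D w0).ncard ≤ ({e w0} ∪ (fun u => edgeCol Δ w0 u) '' ↑(W'.erase w0)).ncard :=
            Set.ncard_le_ncard hsubD ((Set.finite_singleton _).union
              (((W'.erase w0).finite_toSet).image _))
        _ ≤ ({e w0} : Set ℕ).ncard + ((fun u => edgeCol Δ w0 u) '' ↑(W'.erase w0)).ncard :=
            Set.ncard_union_le _ _
        _ ≤ 1 + (↑(W'.erase w0) : Set ℕ).ncard := by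
            have h1 := Set.ncard_image_le (f := fun u => edgeCol Δ w0 u)
              (s := (↑(W'.erase w0) : Set ℕ)) ((W'.erase w0).finite_toSet)
            rw [Set.ncard_singleton]
            omega
        _ = 1 + (W'.erase w0).card := by rw [Set.ncard_coe_finset]
        _ = W'.card := by rw [Finset.card_erase_of_mem hw0]
                          have := Finset.card_pos.2 ⟨w0, hw0⟩
                          omega
    have hbs3 : b - s ≤ 3 := le_trans (le_trans (hDlow w0 hw0) hDup) hn3
    -- forces s = 2, b = 5, |W'| = 3
    have hs2 : s = 2 := by omega
    have hb5 : b = 5 := by omega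
    have hcard3 : W'.card = 3 := by
      have := le_trans (hDlow w0 hw0) hDup
      omega
    obtain ⟨w1, w2, w3, h12, h13, h23, hW'eq⟩ := Finset.card_eq_three.1 hcard3
    have hw1 : w1 ∈ W' := by rw [hW'eq]; simp
    have hw2 : w2 ∈ W' := by rw [hW'eq]; simp
    have hw3 : w3 ∈ W' := by rw [hW'eq]; simp
    -- pair traces
    have hpairT : ∀ u ∈ W', ∀ v ∈ W', u ≠ v →
        (colourSet Δ (M ∪ ↑({u, v} : Finset ℕ))).ncard ≤ 2 ∧
        γ ∈ colourSet Δ (M ∪ ↑({u, v} : Finset ℕ)) := by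
      intro u hu v hv huv
      have hpsub : ({u, v} : Finset ℕ) ⊆ W' := by
        intro a ha
        rcases Finset.mem_insert.1 ha with rfl | ha
        · exact hu
        · rw [Finset.mem_singleton] at ha; subst ha; exact hv
      have hγmem : γ ∈ colourSet Δ (M ∪ ↑({u, v} : Finset ℕ)) :=
        (hch _ hpsub γ).2 (Or.inl rfl)
      have hsub4 : colourSet Δ (M ∪ ↑({u, v} : Finset ℕ)) ⊆
          insert γ (insert (e u) (insert (e v) {edgeCol Δ u v})) := by
        intro d hd
        rcases (hch _ hpsub d).1 hd with rfl | ⟨w', hw', rfl⟩ | ⟨x, hx2, y, hy2, hxy, rfl⟩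
        · exact Set.mem_insert _ _
        · have hw'2 : w' = u ∨ w' = v := by simpa using hw'
          rcases hw'2 with h | h
          · rw [h]; exact Or.inr (Or.inl rfl)
          · rw [h]; exact Or.inr (Or.inr (Or.inl rfl))
        · have hx' : x = u ∨ x = v := by simpa using hx2
          have hy' : y = u ∨ y = v := by simpa using hy2
          rcases hx' with h1 | h1 <;> rcases hy' with h2 | h2
          · exact absurd (h1.trans h2.symm) hxy
          · rw [h1, h2]; exact Or.inr (Or.inr (Or.inr rfl))
          · rw [h1, h2, edgeCol_symm Δ v u]; exact Or.inr (Or.inr (Or.inr rfl))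
          · exact absurd (h1.trans h2.symm) hxy
      have hle4 : (colourSet Δ (M ∪ ↑({u, v} : Finset ℕ))).ncard ≤ 4 := by
        have hfin4 : (insert γ (insert (e u) (insert (e v) ({edgeCol Δ u v} : Set ℕ)))).Finite :=
          (((Set.finite_singleton _).insert _).insert _).insert _
        calc (colourSet Δ (M ∪ ↑({u, v} : Finset ℕ))).ncard
            ≤ (insert γ (insert (e u) (insert (e v) ({edgeCol Δ u v} : Set ℕ)))).ncard :=
              Set.ncard_le_ncard hsub4 hfin4
          _ ≤ 4 := by
              have i1 := Set.ncard_insert_le γ (insert (e u) (insert (e v)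
                ({edgeCol Δ u v} : Set ℕ)))
              have i2 := Set.ncard_insert_le (e u) (insert (e v) ({edgeCol Δ u v} : Set ℕ))
              have i3 := Set.ncard_insert_le (e v) ({edgeCol Δ u v} : Set ℕ)
              have i4 : ({edgeCol Δ u v} : Set ℕ).ncard = 1 := Set.ncard_singleton _
              omega
      rcases hstar _ (hsubX _ hpsub) (hinfU _) with h | h
      · exact ⟨by omega, hγmem⟩
      · omega
    obtain ⟨hP12, hγ12⟩ := hpairT w1 hw1 w2 hw2 h12
    obtain ⟨hP13, hγ13⟩ := hpairT w1 hw1 w3 hw3 h13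
    obtain ⟨hP23, hγ23⟩ := hpairT w2 hw2 w3 hw3 h23
    set P12 := colourSet Δ (M ∪ ↑({w1, w2} : Finset ℕ)) with hP12def
    set P13 := colourSet Δ (M ∪ ↑({w1, w3} : Finset ℕ)) with hP13def
    set P23 := colourSet Δ (M ∪ ↑({w2, w3} : Finset ℕ)) with hP23def
    have hpair_sub : ∀ u ∈ W', ∀ v ∈ W', ({u, v} : Finset ℕ) ⊆ W' := by
      intro u hu v hv a ha
      rcases Finset.mem_insert.1 ha with rfl | ha
      · exact hu
      · rw [Finset.mem_singleton] at ha; subst ha; exact hv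
    have hTsub : colourSet Δ (M ∪ ↑W') ⊆ P12 ∪ (P13 \ {γ}) ∪ (P23 \ {γ}) := by
      intro d hd
      by_cases hdγ : d = γ
      · subst hdγ; exact Or.inl (Or.inl hγ12)
      · rcases (hch W' subset_rfl d).1 hd with rfl | ⟨w', hw', rfl⟩ | ⟨x, hx2, y, hy2, hxy, rfl⟩
        · exact absurd rfl hdγ
        · have hw'3 : w' = w1 ∨ w' = w2 ∨ w' = w3 := by
            have h' := hw'; rw [hW'eq] at h'; simpa using h'
          rcases hw'3 with h | h | h
          · exact Or.inl (Or.inl ((hch _ (hpair_sub _ hw1 _ hw2) _).2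
              (Or.inr (Or.inl ⟨w1, by simp, by rw [h]⟩))))
          · exact Or.inl (Or.inl ((hch _ (hpair_sub _ hw1 _ hw2) _).2
              (Or.inr (Or.inl ⟨w2, by simp, by rw [h]⟩))))
          · exact Or.inl (Or.inr ⟨(hch _ (hpair_sub _ hw1 _ hw3) _).2
              (Or.inr (Or.inl ⟨w3, by simp, by rw [h]⟩)), by simpa using hdγ⟩)
        · have hx3 : x = w1 ∨ x = w2 ∨ x = w3 := by
            have h' := hx2; rw [hW'eq] at h'; simpa using h'
          have hy3 : y = w1 ∨ y = w2 ∨ y = w3 := by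
            have h' := hy2; rw [hW'eq] at h'; simpa using h'
          rcases hx3 with rfl | rfl | rfl <;> rcases hy3 with rfl | rfl | rfl
          · exact absurd rfl hxy
          · exact Or.inl (Or.inl ((hch _ (hpair_sub _ hw1 _ hw2) _).2
              (Or.inr (Or.inr ⟨x, by simp, y, by simp, hxy, rfl⟩))))
          · exact Or.inl (Or.inr ⟨(hch _ (hpair_sub _ hw1 _ hw3) _).2
              (Or.inr (Or.inr ⟨x, by simp, y, by simp, hxy, rfl⟩)), by simpa using hdγ⟩)
          · exact Or.inl (Or.inl ((hch _ (hpair_sub _ hw1 _ hw2) _).2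
              (Or.inr (Or.inr ⟨x, by simp, y, by simp, hxy, rfl⟩))))
          · exact absurd rfl hxy
          · exact Or.inr ⟨(hch _ (hpair_sub _ hw2 _ hw3) _).2
              (Or.inr (Or.inr ⟨x, by simp, y, by simp, hxy, rfl⟩)), by simpa using hdγ⟩
          · exact Or.inl (Or.inr ⟨(hch _ (hpair_sub _ hw1 _ hw3) _).2
              (Or.inr (Or.inr ⟨x, by simp, y, by simp, hxy, rfl⟩)), by simpa using hdγ⟩)
          · exact Or.inr ⟨(hch _ (hpair_sub _ hw2 _ hw3) _).2
              (Or.inr (Or.inr ⟨x, by simp, y, by simp, hxy, rfl⟩)), by simpa using hdγ⟩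
          · exact absurd rfl hxy
    have hu13 : (P13 \ {γ}).ncard ≤ 1 := by
      have heq : (P13 \ {γ}).ncard = P13.ncard - 1 := by
        have h := Set.ncard_diff (Set.singleton_subset_iff.2 hγ13) (Set.finite_singleton γ)
        simpa using h
      omega
    have hu23 : (P23 \ {γ}).ncard ≤ 1 := by
      have heq : (P23 \ {γ}).ncard = P23.ncard - 1 := by
        have h := Set.ncard_diff (Set.singleton_subset_iff.2 hγ23) (Set.finite_singleton γ)
        simpa using h
      omega
    have hfinU : (P12 ∪ (P13 \ {γ}) ∪ (P23 \ {γ})).Finite :=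
      ((colourSet_finite hcol _).union ((colourSet_finite hcol _).subset Set.diff_subset)).union
        ((colourSet_finite hcol _).subset Set.diff_subset)
    have hble : b ≤ P12.ncard + (P13 \ {γ}).ncard + (P23 \ {γ}).ncard := by
      have h1 : T.ncard ≤ (P12 ∪ (P13 \ {γ}) ∪ (P23 \ {γ})).ncard :=
        Set.ncard_le_ncard hTsub hfinU
      have h2 := Set.ncard_union_le (P12 ∪ (P13 \ {γ})) (P23 \ {γ})
      have h3 := Set.ncard_union_le P12 (P13 \ {γ})
      rw [← hW'b]
      omega
    omega

lemma exists_colouring (k : ℕ) (hk : 1 ≤ k) :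
    IsColouring (fun a b => min (b - a) k) k := by
  constructor
  · intro x y hxy
    have hxy' : min x y < max x y := by
      rcases Nat.lt_or_ge x y with h | h
      · rw [min_eq_left h.le, max_eq_right h.le]; exact h
      · have h2 : y < x := by omega
        rw [min_eq_right h2.le, max_eq_left h2.le]; exact h2
    show min (max x y - min x y) k ∈ Finset.Icc 1 k
    rw [Finset.mem_Icc]
    omega
  · intro c hc
    rw [Finset.mem_Icc] at hc
    refine ⟨0, c, by omega, ?_⟩
    show min (max 0 c - min 0 c) k = c
    omega

end Auxiliary

/-- For every `k ≥ 2` and every surjective colouring `Δ : ℕ^(2) ↠ [k]` one has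
`|F_Δ| ≥ 1 + log₂ k`, in the equivalent form `2 ^ (|F_Δ| - 1) ≥ k`; in particular
`ψ(k) ≥ 1 + log₂ k`, i.e. `2 ^ (ψ(k) - 1) ≥ k`. -/
theorem FSet_log_lower_bound (k : ℕ) (hk : 2 ≤ k) :
    (∀ Δ : ℕ → ℕ → ℕ, IsColouring Δ k → k ≤ 2 ^ ((FSet Δ k).ncard - 1)) ∧
      k ≤ 2 ^ (psi k - 1) := by
  have main : ∀ Δ : ℕ → ℕ → ℕ, IsColouring Δ k → k ≤ 2 ^ ((FSet Δ k).ncard - 1) := by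
    intro Δ hcol
    have chain : ∀ b, b ∈ FSet Δ k → ∃ G : Finset ℕ,
        (↑G : Set ℕ) ⊆ FSet Δ k ∧ (∀ x ∈ G, x ≤ b) ∧ 1 ≤ G.card ∧ b ≤ 2 ^ (G.card - 1) := by
      intro b
      induction b using Nat.strong_induction_on with
      | _ b ih =>
        intro hb
        have hb1 : 1 ≤ b := (Finset.mem_Icc.1 hb.1).1
        rcases eq_or_lt_of_le hb1 with h1 | h2
        · refine ⟨{1}, ?_, ?_, by simp, ?_⟩
          · intro x hx
            simp only [Finset.coe_singleton, Set.mem_singleton_iff] at hx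
            subst hx
            rw [← h1] at hb
            exact hb
          · intro x hx
            rw [Finset.mem_singleton] at hx
            omega
          · simp; omega
        · obtain ⟨s, hsF, hsb, hble⟩ := lemmaD hcol hb (by omega)
          obtain ⟨G, hGF, hGle, hGc, hGpow⟩ := ih s hsb hsF
          have hbG : b ∉ G := fun h => absurd (hGle b h) (by omega)
          refine ⟨insert b G, ?_, ?_, ?_, ?_⟩
          · intro x hx
            simp only [Finset.coe_insert, Set.mem_insert_iff, Finset.mem_coe] at hx
            rcases hx with rfl | hx
            · exact hb
            · exact hGF hx
          · intro x hx
            rcases Finset.mem_insert.1 hx with rfl | hx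
            · exact le_rfl
            · exact (hGle x hx).trans (le_of_lt hsb)
          · rw [Finset.card_insert_of_notMem hbG]; omega
          · rw [Finset.card_insert_of_notMem hbG]
            have heq : (G.card + 1) - 1 = (G.card - 1) + 1 := by omega
            rw [heq, pow_succ]
            calc b ≤ 2 * s := hble
              _ ≤ 2 * 2 ^ (G.card - 1) := by omega
              _ = 2 ^ (G.card - 1) * 2 := by ring
    obtain ⟨G, hGF, _, hGc, hGpow⟩ := chain k (k_mem_FSet hcol)
    have hFfin : (FSet Δ k).Finite :=
      Set.Finite.subset (Finset.Icc 1 k).finite_toSet (fun m hm => hm.1)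
    have hcard : G.card ≤ (FSet Δ k).ncard := by
      rw [← Set.ncard_coe_finset]
      exact Set.ncard_le_ncard hGF hFfin
    exact hGpow.trans (Nat.pow_le_pow_right (by omega) (by omega))
  refine ⟨main, ?_⟩
  have hne : {m | ∃ Δ : ℕ → ℕ → ℕ, IsColouring Δ k ∧ (FSet Δ k).ncard = m}.Nonempty :=
    ⟨_, _, exists_colouring k (by omega), rfl⟩
  obtain ⟨Δ₀, hcol₀, hψ⟩ := Nat.sInf_mem hne
  have hψ' : psi k = (FSet Δ₀ k).ncard := hψ.symm
  rw [hψ']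
  exact main Δ₀ hcol₀
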